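/- arXiv:2108.10023 — 4 statements merged into one kernel-verified Lean document; each statement's English description precedes it below -/
import Mathlib

section
/- Suppose the operators V̂_k^α := (1/2) L̂_{2k} - (1/(2ℏ)) ∂/∂t_{2k+1+2α} + δ_{k,0}/16 are built from the Virasoro operators L̂_m (satisfying [L̂_k, L̂_m] = (k-m)L̂_{k+m} + (1/12)δ_{k,-m}(k³-k)) and the Heisenberg operators ∂/∂t_n. Then for k, m ≥ -α (with α ∈ {0,1}), [V̂_k^α, V̂_m^α] = (k-m) V̂_{k+m}^α. -/
/-- The Virasoro constraint operators
`V̂_k^α = ½ L̂_{2k} - (1/(2ℏ)) Ĵ_{2k+1+2α} + δ_{k,0}/16`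
built from operators `L̂, Ĵ` satisfying the Heisenberg–Virasoro relations
(in an associative ℂ-algebra `A`, e.g. differential operators on
`ℂ[[t₁,t₂,…]]`, with `Ĵ_n = ∂/∂t_n` for `n > 0`) satisfy, for `α ∈ {0,1}`
and `k, m ≥ -α`, the relations `[V̂_k^α, V̂_m^α] = (k-m) V̂_{k+m}^α`. -/
theorem virasoro_constraints_commutation
    (A : Type*) [Ring A] [Algebra ℂ A]
    (L J : ℤ → A) (ℏ : ℂ) (hℏ : ℏ ≠ 0)
    (hLL : ∀ k m : ℤ, L k * L m - L m * L k =
      ((k - m : ℤ) : ℂ) • L (k + m)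
        + (if k = -m then ((k : ℂ)^3 - (k : ℂ)) / 12 else 0) • (1 : A))
    (hLJ : ∀ k n : ℤ, L k * J n - J n * L k = (-n : ℂ) • J (k + n))
    (hJJ : ∀ a b : ℤ, J a * J b - J b * J a =
      (if a = -b then (a : ℂ) else 0) • (1 : A))
    (α : ℤ) (hα : α = 0 ∨ α = 1)
    (V : ℤ → A)
    (hV : ∀ k : ℤ, V k = ((1 : ℂ)/2) • L (2*k)
      - (1 / (2*ℏ)) • J (2*k + 1 + 2*α)
      + (if k = 0 then (1 : ℂ)/16 else 0) • (1 : A)) :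
    ∀ k m : ℤ, -α ≤ k → -α ≤ m →
      V k * V m - V m * V k = ((k - m : ℤ) : ℂ) • V (k + m) := by
  intro k m hk hm
  have hα1 : 0 ≤ α ∧ α ≤ 1 := by rcases hα with h | h <;> omega
  have key : V k * V m - V m * V k
      = ((1:ℂ)/4) • (L (2*k) * L (2*m) - L (2*m) * L (2*k))
        - (1/(4*ℏ)) • (L (2*k) * J (2*m+1+2*α) - J (2*m+1+2*α) * L (2*k))
        + (1/(4*ℏ)) • (L (2*m) * J (2*k+1+2*α) - J (2*k+1+2*α) * L (2*m))
        + (1/(4*ℏ^2)) • (J (2*k+1+2*α) * J (2*m+1+2*α)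
            - J (2*m+1+2*α) * J (2*k+1+2*α)) := by
    rw [hV k, hV m]
    simp only [mul_sub, sub_mul, mul_add, add_mul, smul_mul_assoc, mul_smul_comm,
      smul_smul, one_mul, mul_one, smul_sub, smul_add]
    match_scalars <;> (try split_ifs) <;> field_simp <;> try ring
  rw [key, hLL, hLJ, hLJ, hJJ, hV]
  have e1 : 2*k + 2*m = 2*(k+m) := by ring
  have e2 : 2*k + (2*m+1+2*α) = 2*(k+m)+1+2*α := by ring
  have e3 : 2*m + (2*k+1+2*α) = 2*(k+m)+1+2*α := by ring
  have hnot : ¬ (2*k+1+2*α = -(2*m+1+2*α)) := by omega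
  rw [e1, e2, e3, if_neg hnot]
  by_cases hkm : k = -m
  · subst hkm
    rw [if_pos (by ring : 2*(-m) = -(2*m)), if_pos (by ring : -m + m = 0)]
    have hmc : (m:ℂ)^3 = m := by
      have : m = -1 ∨ m = 0 ∨ m = 1 := by omega
      rcases this with h | h | h <;> subst h <;> norm_num
    match_scalars <;> (try field_simp) <;> try ring
    all_goals linear_combination (-128 : ℂ) * ℏ^2 * hmc
  · rw [if_neg (show ¬ (2*k = -(2*m)) by omega), if_neg (show ¬ (k+m = 0) by omega)]
    match_scalars <;> field_simp <;> ring
end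

section
/- Let p, q be parameters with p, q, p+q nonzero, and define x(z) = ((p+q)/(pq)) log(1 + qz/√(p+q)) - (1/p) log(1 + √(p+q) z) and y₁(z) = (√(p+q)/p)(log(1 + √(p+q) z) - log(1 + qz/√(p+q))) as formal power series. Then they satisfy the identity p·exp(-q·x(z)) = (p+q)·exp((q/√(p+q))·y₁(z)) - q·exp(√(p+q)·y₁(z)). -/
open PowerSeries

/-- The formal power series `log(1 + a z) = Σ_{n≥1} (-1)^{n-1} aⁿ zⁿ / n`. -/
noncomputable def logOneAdd (a : ℂ) : PowerSeries ℂ :=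
  PowerSeries.mk fun n => if n = 0 then 0 else (-1)^(n+1) * a^n / n

lemma logOneAdd_coeff_deriv (a : ℂ) (n : ℕ) :
    coeff n (d⁄dX ℂ (logOneAdd a)) = (-1)^n * a^(n+1) := by
  rw [PowerSeries.coeff_derivative, logOneAdd, coeff_mk]
  rw [if_neg (Nat.succ_ne_zero n)]
  have hne : ((n : ℂ) + 1) ≠ 0 := Nat.cast_add_one_ne_zero n
  push_cast
  rw [div_mul_cancel₀ _ hne, pow_succ, pow_succ]
  ring

lemma logOneAdd_deriv_mul (a : ℂ) :
    d⁄dX ℂ (logOneAdd a) * (1 + C a * X) = C a := by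
  ext n
  rw [mul_add, mul_one, ← mul_assoc, mul_comm (d⁄dX ℂ (logOneAdd a)) (C a), mul_assoc]
  cases n with
  | zero =>
    have h0 := logOneAdd_coeff_deriv a 0
    rw [coeff_zero_eq_constantCoeff] at h0
    simp [h0]
  | succ n =>
    rw [map_add, PowerSeries.coeff_succ_C, coeff_C_mul,
      PowerSeries.coeff_succ_mul_X, logOneAdd_coeff_deriv, logOneAdd_coeff_deriv]
    ring

lemma ode_unique (g F G : PowerSeries ℂ)
    (h0 : constantCoeff F = constantCoeff G)
    (hF : d⁄dX ℂ F = g * F) (hG : d⁄dX ℂ G = g * G) : F = G := by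
  ext n
  induction n using Nat.strong_induction_on with
  | _ n ih =>
    match n with
    | 0 => simpa [PowerSeries.coeff_zero_eq_constantCoeff] using h0
    | Nat.succ n =>
      have h1 := congrArg (coeff n) hF
      have h2 := congrArg (coeff n) hG
      rw [PowerSeries.coeff_derivative] at h1 h2
      have hsum : coeff n (g * F) = coeff n (g * G) := by
        rw [PowerSeries.coeff_mul, PowerSeries.coeff_mul]
        apply Finset.sum_congr rfl
        intro x hx
        have hle : x.2 ≤ n := Finset.HasAntidiagonal.antidiagonal.snd_le hx
        rw [ih x.2 (Nat.lt_succ_of_le hle)]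
      have hne : ((n : ℂ) + 1) ≠ 0 := Nat.cast_add_one_ne_zero n
      exact mul_right_cancel₀ hne (h1.trans (hsum.trans h2.symm))

/-- The spectral curve identity
`p exp(-q x(z)) = (p+q) exp((q/√(p+q)) y₁(z)) - q exp(√(p+q) y₁(z))`,
where (with `s = √(p+q)`, `p, q, p+q ≠ 0`)
`x(z) = ((p+q)/(pq)) log(1 + qz/s) - (1/p) log(1 + sz)` and
`y₁(z) = (s/p)(log(1 + sz) - log(1 + qz/s))`.
The formal exponentials `A = exp(-q x)`, `E₁ = exp((q/s) y₁)`,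
`E₂ = exp(s y₁)` are characterized as the unique formal power series with
constant term `1` satisfying `A' = (-q x)' A`, `E₁' = ((q/s) y₁)' E₁`,
`E₂' = (s y₁)' E₂`. -/
theorem spectral_curve_exponential_identity
    (p q s : ℂ) (hp : p ≠ 0) (hq : q ≠ 0) (hs : s ≠ 0) (hsq : s^2 = p + q)
    (x y₁ A E₁ E₂ : PowerSeries ℂ)
    (hx : x = C ((p + q)/(p*q)) * logOneAdd (q/s) - C (1/p) * logOneAdd s)
    (hy : y₁ = C (s/p) * (logOneAdd s - logOneAdd (q/s)))
    (hA0 : constantCoeff A = 1) (hA : d⁄dX ℂ A = d⁄dX ℂ (C (-q) * x) * A)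
    (hE10 : constantCoeff E₁ = 1) (hE1 : d⁄dX ℂ E₁ = d⁄dX ℂ (C (q/s) * y₁) * E₁)
    (hE20 : constantCoeff E₂ = 1) (hE2 : d⁄dX ℂ E₂ = d⁄dX ℂ (C s * y₁) * E₂) :
    C p * A = C (p + q) * E₁ - C q * E₂ := by
  have hpq : p + q ≠ 0 := by rw [← hsq]; exact pow_ne_zero 2 hs
  have key1 : C (q/s) * y₁ - C (-q) * x = logOneAdd (q/s) := by
    rw [hx, hy]
    have hB : -(C (q/s) * C (s/p)) - C (-q) * C ((p+q)/(p*q)) = 1 := by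
      rw [← map_mul, ← map_mul, ← map_neg, ← map_sub, ← map_one (C (R := ℂ))]
      congr 1
      field_simp
      ring
    have hA2 : C (q/s) * C (s/p) + C (-q) * C (1/p) = 0 := by
      rw [← map_mul, ← map_mul, ← map_add, ← map_zero (C (R := ℂ))]
      congr 1
      field_simp
      ring
    linear_combination logOneAdd (q/s) * hB + logOneAdd s * hA2
  have key2 : C s * y₁ - C (-q) * x = logOneAdd s := by
    rw [hx, hy]
    have hB : C s * C (s/p) + C (-q) * C (1/p) = 1 := by
      rw [← map_mul, ← map_mul, ← map_add, ← map_one (C (R := ℂ))]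
      congr 1
      field_simp
      linear_combination hsq
    have hA2 : -(C s * C (s/p)) - C (-q) * C ((p+q)/(p*q)) = 0 := by
      rw [← map_mul, ← map_mul, ← map_neg, ← map_sub, ← map_zero (C (R := ℂ))]
      congr 1
      field_simp
      linear_combination (-1) * hsq
    linear_combination logOneAdd (q/s) * hA2 + logOneAdd s * hB
  have hprod : ∀ (a : ℂ) (w : PowerSeries ℂ),
      C a * w - C (-q) * x = logOneAdd a →
      d⁄dX ℂ (A * (1 + C a * X)) = d⁄dX ℂ (C a * w) * (A * (1 + C a * X)) := by
    intro a w hkey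
    have hder : d⁄dX ℂ (A * (1 + C a * X)) =
        d⁄dX ℂ A * (1 + C a * X) + A * (d⁄dX ℂ (1 + C a * X)) := by
      rw [Derivation.leibniz, smul_eq_mul, smul_eq_mul]
      ring
    have hXder : d⁄dX ℂ (1 + C a * X) = C a := by
      rw [map_add, Derivation.leibniz, smul_eq_mul, smul_eq_mul,
        PowerSeries.derivative_X, PowerSeries.derivative_C]
      have h1 : d⁄dX ℂ ((1 : PowerSeries ℂ)) = 0 := by
        simpa using PowerSeries.derivative_C (R := ℂ) 1
      rw [h1]
      ring
    rw [hder, hA, hXder]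
    have hkey' : d⁄dX ℂ (C a * w) - d⁄dX ℂ (C (-q) * x) = d⁄dX ℂ (logOneAdd a) := by
      rw [← map_sub, hkey]
    have hmul := logOneAdd_deriv_mul a
    linear_combination (-(1 + C a * X) * A) * hkey' + (-A) * hmul
  have hE1' : E₁ = A * (1 + C (q/s) * X) := by
    apply ode_unique (d⁄dX ℂ (C (q/s) * y₁)) E₁ _ _ hE1 (hprod (q/s) y₁ key1)
    simp [hE10, hA0]
  have hE2' : E₂ = A * (1 + C s * X) := by
    apply ode_unique (d⁄dX ℂ (C s * y₁)) E₂ _ _ hE2 (hprod s y₁ key2)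
    simp [hE20, hA0]
  rw [hE1', hE2']
  have hc : C (p+q) * C (q/s) - C q * C s = 0 := by
    rw [← map_mul, ← map_mul, ← map_sub, ← map_zero (C (R := ℂ))]
    congr 1
    field_simp
    linear_combination (-q) * hsq
  have hc2 : C (p+q) = C p + C q := map_add _ _ _
  linear_combination (-A) * hc2 + (-(A * X)) * hc
end

section
/- Define h̃(z) = (p/(q√(p+q))) · (exp(2qz/√(p+q)) - 1)/(1 - exp(-2pz/√(p+q))) - 1/√(p+q) as a formal power series in z (for p, q, p+q nonzero). Then h̃(z) = z + Σ_{k≥2} (c_k/(p+q)^{(k-1)/2}) z^k where each c_k ∈ Q[p,q] is a polynomial of total degree k-1; in particular the compositional inverse f̃(z) of h̃ begins f̃(z) = z - (1/3)((p+2q)/√(p+q)) z² + ((2p² + 5pq + 5q²)/(9(p+q))) z³ + O(z⁴). -/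
open PowerSeries

/-- `exp(c z)` as a formal power series. -/
noncomputable def expc (c : ℂ) : PowerSeries ℂ :=
  PowerSeries.mk fun n => c^n / n.factorial

/-- Composition `f ∘ g` of formal power series (`g` with zero constant
term): the coefficient of `z^m` is `Σ_{n≤m} fₙ · [z^m] gⁿ`. -/
noncomputable def pcomp (f g : PowerSeries ℂ) : PowerSeries ℂ :=
  PowerSeries.mk fun m => ∑ n ∈ Finset.range (m+1), coeff n f * coeff m (g^n)

section Aux
open Finset

/-- coefficient `α_i^{(k)} = 2^k B'_i /(i! (k+1-i)!)`. -/
noncomputable def alq (k i : ℕ) : ℚ := 2^k * bernoulli' i / (i.factorial * (k+1-i).factorial)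

noncomputable def beq (k m : ℕ) : ℚ := (-1)^m * ∑ i ∈ range (m+1), (-1)^i * alq k i

lemma beq_zero (k : ℕ) : beq k 0 = alq k 0 := by simp [beq]

lemma beq_succ_add (k m : ℕ) : beq k (m+1) + beq k m = alq k (m+1) := by
  have h : ((-1:ℚ))^m * (-1)^m = 1 := by rw [← mul_pow]; norm_num
  rw [beq, beq, sum_range_succ]
  linear_combination (alq k (m+1)) * h

lemma inv_fact_eq (n i : ℕ) (h : i ≤ n) :
    ((i.factorial : ℚ) * (n - i).factorial)⁻¹ = n.choose i / n.factorial := by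
  have key : (n.choose i : ℚ) * i.factorial * (n-i).factorial = n.factorial := by
    exact_mod_cast congrArg (Nat.cast (R := ℚ)) (Nat.choose_mul_factorial_mul_factorial h)
  have h1 : (i.factorial : ℚ) ≠ 0 := by exact_mod_cast i.factorial_ne_zero
  have h2 : ((n-i).factorial : ℚ) ≠ 0 := by exact_mod_cast (n-i).factorial_ne_zero
  have h3 : (n.factorial : ℚ) ≠ 0 := by exact_mod_cast n.factorial_ne_zero
  field_simp
  linarith [key]

lemma beq_top (k : ℕ) (hk : 2 ≤ k) : beq k k = 0 := by
  have hsum : ∑ i ∈ range (k+1), (-1:ℚ)^i * alq k i = 0 := by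
    have : ∀ i ∈ range (k+1), (-1:ℚ)^i * alq k i
        = 2^k / (k+1).factorial * ((k+1).choose i * bernoulli i) := by
      intro i hi
      rw [mem_range] at hi
      have : (k + 1 - i : ℕ) = (k+1) - i := rfl
      rw [alq, bernoulli]
      rw [div_eq_mul_inv, inv_fact_eq (k+1) i (by omega)]
      ring
    rw [sum_congr rfl this, ← mul_sum, sum_bernoulli]
    simp [Nat.succ_ne_zero]
    omega
  rw [beq, hsum, mul_zero]
noncomputable def cpoly (k : ℕ) : MvPolynomial (Fin 2) ℚ :=
  ∑ m ∈ range k, MvPolynomial.C (beq k m) * MvPolynomial.X 0 ^ m * MvPolynomial.X 1 ^ (k-1-m)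

lemma cpoly_totalDegree (k : ℕ) : (cpoly k).totalDegree ≤ k - 1 := by
  refine MvPolynomial.totalDegree_finsetSum_le fun m hm => ?_
  rw [mem_range] at hm
  calc (MvPolynomial.C (beq k m) * MvPolynomial.X (0:Fin 2) ^ m
          * MvPolynomial.X (1:Fin 2) ^ (k-1-m)).totalDegree
      ≤ (MvPolynomial.C (beq k m) * MvPolynomial.X (0:Fin 2) ^ m).totalDegree
          + (MvPolynomial.X (1:Fin 2) ^ (k-1-m)).totalDegree := MvPolynomial.totalDegree_mul _ _
    _ ≤ ((MvPolynomial.C (beq k m) : MvPolynomial (Fin 2) ℚ).totalDegree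
          + (MvPolynomial.X (0:Fin 2) ^ m).totalDegree) + (k-1-m) := by
          rw [MvPolynomial.totalDegree_X_pow]
          exact Nat.add_le_add_right (MvPolynomial.totalDegree_mul _ _) _
    _ ≤ k - 1 := by
          rw [MvPolynomial.totalDegree_C, MvPolynomial.totalDegree_X_pow]
          omega

lemma aeval_cpoly (k : ℕ) (p q : ℂ) :
    MvPolynomial.aeval ![p,q] (cpoly k) = ∑ m ∈ range k, (beq k m : ℂ) * p^m * q^(k-1-m) := by
  rw [cpoly, map_sum]
  refine sum_congr rfl fun m _ => ?_
  simp [eq_ratCast (algebraMap ℚ ℂ)]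

lemma key_sum (k : ℕ) (hk : 2 ≤ k) (p q : ℂ) :
    (p + q) * ∑ m ∈ range k, (beq k m : ℂ) * p^m * q^(k-1-m)
      = ∑ i ∈ range (k+1), (alq k i : ℂ) * p^i * q^(k-i) := by
  have h1 : ∑ i ∈ range (k+1), (alq k i : ℂ) * p^i * q^(k-i)
      = (∑ i ∈ range k, (alq k (i+1) : ℂ) * p^(i+1) * q^(k-1-i)) + (alq k 0 : ℂ) * q^k := by
    rw [sum_range_succ']
    congr 1
    · refine sum_congr rfl fun i hi => ?_
      rw [mem_range] at hi
      congr 2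
      omega
    · simp
  have h2 : ∑ i ∈ range (k+1), (beq k i : ℂ) * p^i * q^(k-i)
      = (∑ i ∈ range k, (beq k (i+1) : ℂ) * p^(i+1) * q^(k-1-i)) + (beq k 0 : ℂ) * q^k := by
    rw [sum_range_succ']
    congr 1
    · refine sum_congr rfl fun i hi => ?_
      rw [mem_range] at hi
      congr 2
      omega
    · simp
  have h3 : ∑ i ∈ range (k+1), (beq k i : ℂ) * p^i * q^(k-i)
      = ∑ i ∈ range k, (beq k i : ℂ) * p^i * q^(k-i) := by
    rw [sum_range_succ, beq_top k hk]
    simp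
  have h4 : ∀ i ∈ range k, (alq k (i+1) : ℂ) * p^(i+1) * q^(k-1-i)
      = (beq k (i+1) : ℂ) * p^(i+1) * q^(k-1-i) + (beq k i : ℂ) * p^(i+1) * q^(k-1-i) := by
    intro i _
    rw [← beq_succ_add k i]
    push_cast
    ring
  rw [h1, sum_congr rfl h4, sum_add_distrib,
    show alq k 0 = beq k 0 from (beq_zero k).symm]
  have h5 : (∑ i ∈ range k, (beq k (i+1) : ℂ) * p^(i+1) * q^(k-1-i)) + (beq k 0 : ℂ) * q^k
      = ∑ i ∈ range k, (beq k i : ℂ) * p^i * q^(k-i) := by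
    rw [← h2, h3]
  have h6 : ∀ i ∈ range k, (beq k i : ℂ) * p^i * q^(k-i)
      = (beq k i : ℂ) * p^i * q^(k-1-i) * q := by
    intro i hi
    rw [mem_range] at hi
    rw [show k - i = (k-1-i) + 1 by omega, pow_succ]
    ring
  have h7 : ∀ i ∈ range k, (beq k i : ℂ) * p^(i+1) * q^(k-1-i)
      = (beq k i : ℂ) * p^i * q^(k-1-i) * p := by
    intro i _
    rw [pow_succ]
    ring
  calc (p + q) * ∑ m ∈ range k, (beq k m : ℂ) * p^m * q^(k-1-m)
      = (∑ i ∈ range k, (beq k i : ℂ) * p^i * q^(k-1-i) * p)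
        + ∑ i ∈ range k, (beq k i : ℂ) * p^i * q^(k-1-i) * q := by
        rw [← sum_add_distrib, mul_sum]
        refine sum_congr rfl fun i _ => ?_
        ring
    _ = (∑ i ∈ range k, (beq k i : ℂ) * p^(i+1) * q^(k-1-i))
        + ∑ i ∈ range k, (beq k i : ℂ) * p^i * q^(k-i) := by
        rw [sum_congr rfl h6, sum_congr rfl h7]
    _ = (∑ i ∈ range k, (beq k (i+1) : ℂ) * p^(i+1) * q^(k-1-i)) + (beq k 0 : ℂ) * q^k
        + ∑ i ∈ range k, (beq k i : ℂ) * p^i * q^(k-1-i) * p := by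
        rw [h5, sum_congr rfl h7]
        ring
    _ = _ := by
        rw [sum_congr rfl h7]
        ring

noncomputable def Jser (a : ℂ) : PowerSeries ℂ := mk fun j => a^j / (j+1).factorial

lemma expc_eq_rescale (c : ℂ) : expc c = rescale c (exp ℂ) := by
  ext n
  rw [expc, coeff_mk, coeff_rescale, coeff_exp, eq_ratCast (algebraMap ℚ ℂ)]
  push_cast
  ring

lemma X_mul_J (a : ℂ) : C a * X * Jser a = expc a - 1 := by
  ext n
  cases' n with n
  · simp [expc, Jser]
  · rw [mul_assoc, coeff_C_mul, coeff_succ_X_mul, Jser, coeff_mk, expc, map_sub, coeff_mk]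
    rw [coeff_one]
    simp [pow_succ]
    ring

lemma Bst_mul_D (b : ℂ) :
    rescale b (bernoulli'PowerSeries ℂ) * (1 - expc (-b)) = C b * X := by
  have h1 : bernoulli'PowerSeries ℂ * (1 - rescale (-1) (exp ℂ)) = X := by
    have h2 := bernoulli'PowerSeries_mul_exp_sub_one ℂ
    have h3 : exp ℂ * rescale (-1) (exp ℂ) = 1 := exp_mul_exp_neg_eq_one (A := ℂ)
    have h4 : bernoulli'PowerSeries ℂ * (exp ℂ - 1) * rescale (-1) (exp ℂ)
        = X * (exp ℂ * rescale (-1) (exp ℂ)) := by rw [h2]; ring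
    rw [h3, mul_one] at h4
    linear_combination h4 - bernoulli'PowerSeries ℂ * h3
  have h5 := congrArg (rescale b) h1
  rw [map_mul, map_sub, map_one, rescale_rescale, rescale_X] at h5
  rw [expc_eq_rescale]
  convert h5 using 4
  ring
lemma hexp_spec (p q s : ℂ) (hq : q ≠ 0) (hs : s ≠ 0) :
    (C (1/s) * (Jser (2*q/s) * rescale (2*p/s) (bernoulli'PowerSeries ℂ) - 1))
        * (1 - expc (-2*p/s))
      = C (p/(q*s)) * (expc (2*q/s) - 1) - C (1/s) * (1 - expc (-2*p/s)) := by
  have hB := Bst_mul_D (2*p/s)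
  rw [show -(2*p/s) = -2*p/s by ring] at hB
  have hJ := X_mul_J (2*q/s)
  have hC : C (1/s) * C (2*p/s) = C (p/(q*s)) * C (2*q/s) := by
    rw [← map_mul, ← map_mul]
    congr 1
    field_simp
  linear_combination (C (1/s) * Jser (2*q/s)) * hB + C (p/(q*s)) * hJ
    + (X * Jser (2*q/s)) * hC

lemma coeff_term (i j : ℕ) (B : ℂ) (p q s : ℂ) (hs : s ≠ 0) :
    (2*q/s)^i / ((i+1).factorial : ℂ) * ((2*p/s)^j * (B / (j.factorial : ℂ)))
      = 2^(i+j) * B / ((j.factorial : ℂ) * ((i+1).factorial : ℂ)) * p^j * q^i / s^(i+j) := by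
  have h1 : ((i+1).factorial : ℂ) ≠ 0 := Nat.cast_ne_zero.mpr (i+1).factorial_ne_zero
  have h2 : ((j).factorial : ℂ) ≠ 0 := Nat.cast_ne_zero.mpr (j).factorial_ne_zero
  rw [div_pow, div_pow, pow_add]
  field_simp
  ring

lemma coeff_hexp (p q s : ℂ) (hs : s ≠ 0) (k : ℕ) (hk : 1 ≤ k) :
    coeff k (C (1/s) * (Jser (2*q/s) * rescale (2*p/s) (bernoulli'PowerSeries ℂ) - 1))
      = (∑ i ∈ range (k+1), (alq k i : ℂ) * p^i * q^(k-i)) / s^(k+1) := by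
  rw [coeff_C_mul, map_sub, coeff_one, if_neg (by omega), coeff_mul,
    Finset.Nat.sum_antidiagonal_eq_sum_range_succ_mk]
  have hterm : ∀ i ∈ range (k+1),
      coeff i (Jser (2*q/s)) * coeff (k-i) (rescale (2*p/s) (bernoulli'PowerSeries ℂ))
        = (alq k (k-i) : ℂ) * p^(k-i) * q^i / s^k := by
    intro i hi
    rw [mem_range] at hi
    have hij : i + (k - i) = k := by omega
    rw [Jser, coeff_mk, coeff_rescale, bernoulli'PowerSeries, coeff_mk,
      eq_ratCast (algebraMap ℚ ℂ), alq]
    have hk1 : k + 1 - (k - i) = i + 1 := by omega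
    rw [hk1]
    push_cast
    have hct := coeff_term i (k-i) ((bernoulli' (k-i) : ℂ)) p q s hs
    rw [hij] at hct
    rw [hct]
  rw [sum_congr rfl hterm]
  rw [← Finset.sum_range_reflect (fun i => (alq k i : ℂ) * p^i * q^(k-i)) (k+1)]
  have hre : ∀ i ∈ range (k+1),
      (alq k (k + 1 - 1 - i) : ℂ) * p^(k+1-1-i) * q^(k-(k+1-1-i))
        = (alq k (k-i) : ℂ) * p^(k-i) * q^i := by
    intro i hi
    rw [mem_range] at hi
    congr 2 <;> omega
  rw [sum_congr rfl hre, sub_zero, Finset.mul_sum, Finset.sum_div]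
  refine sum_congr rfl fun i _ => ?_
  rw [pow_succ]
  ring

end Aux

/-- The series
`h̃(z) = (p/(q√(p+q))) (e^{2qz/√(p+q)} - 1)/(1 - e^{-2pz/√(p+q)}) - 1/√(p+q)`
(characterized below, with `s = √(p+q)`, by multiplying through by the
denominator `1 - e^{-2pz/s}`) has the form
`h̃(z) = z + Σ_{k≥2} (c_k/(p+q)^{(k-1)/2}) z^k` with `c_k ∈ ℚ[p,q]` a
polynomial of total degree `≤ k-1`, and its compositional inverse `f̃`
begins `f̃(z) = z - (1/3)((p+2q)/√(p+q)) z² + ((2p²+5pq+5q²)/(9(p+q))) z³ + O(z⁴)`. -/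
theorem htilde_coefficients_and_inverse :
    ∃ c : ℕ → MvPolynomial (Fin 2) ℚ,
      (∀ k : ℕ, (c k).totalDegree ≤ k - 1) ∧
      ∀ (p q s : ℂ), p ≠ 0 → q ≠ 0 → s ≠ 0 → s^2 = p + q →
      ∀ h : PowerSeries ℂ,
        h * (1 - expc (-2*p/s))
          = C (p/(q*s)) * (expc (2*q/s) - 1) - C (1/s) * (1 - expc (-2*p/s)) →
        (coeff 0 h = 0 ∧ coeff 1 h = 1 ∧
         (∀ k : ℕ, 2 ≤ k →
            coeff k h = (MvPolynomial.aeval ![p, q] (c k)) / s^(k-1)) ∧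
         ∀ ft : PowerSeries ℂ, coeff 0 ft = 0 → pcomp h ft = X →
           (coeff 1 ft = 1 ∧
            coeff 2 ft = -(1/3) * (p + 2*q) / s ∧
            coeff 3 ft = (2*p^2 + 5*p*q + 5*q^2) / (9*(p + q)))) := by
  refine ⟨cpoly, cpoly_totalDegree, ?_⟩
  intro p q s hp hq hs hs2 h hEq
  have hpq : p + q ≠ 0 := hs2 ▸ pow_ne_zero 2 hs
  -- h equals the explicit series
  have hD : (1 - expc (-2*p/s) : PowerSeries ℂ) ≠ 0 := by
    intro h0
    have h1 := congrArg (coeff 1) h0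
    rw [map_sub, coeff_one, expc, coeff_mk, map_zero] at h1
    simp only [if_neg one_ne_zero, pow_one, Nat.factorial_one, Nat.cast_one, div_one,
      zero_sub] at h1
    field_simp at h1
    simp [hp] at h1
  have hhe : h = C (1/s) * (Jser (2*q/s) * rescale (2*p/s) (bernoulli'PowerSeries ℂ) - 1) :=
    mul_right_cancel₀ hD (hEq.trans (hexp_spec p q s hq hs).symm)
  -- coefficient 0
  have h0 : coeff 0 h = 0 := by
    rw [hhe, coeff_C_mul, map_sub, coeff_mul]
    simp [Jser, bernoulli'PowerSeries, coeff_rescale, bernoulli'_zero]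
  -- coefficient 1
  have h1 : coeff 1 h = 1 := by
    rw [hhe, coeff_hexp p q s hs 1 le_rfl]
    rw [show (1:ℕ)+1 = 0+1+1 from rfl, Finset.sum_range_succ, Finset.sum_range_succ,
      Finset.sum_range_zero]
    norm_num [alq, bernoulli'_zero, bernoulli'_one, Nat.factorial]
    rw [hs2]
    field_simp
    ring
  -- coefficient 2 and 3 values
  have h2v : coeff 2 h = (p + 2*q)/(3*s) := by
    rw [hhe, coeff_hexp p q s hs 2 (by omega)]
    rw [show (2:ℕ)+1 = 0+1+1+1 from rfl, Finset.sum_range_succ, Finset.sum_range_succ,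
      Finset.sum_range_succ, Finset.sum_range_zero]
    norm_num [alq, bernoulli'_zero, bernoulli'_one, bernoulli'_two, Nat.factorial]
    rw [div_eq_div_iff (pow_ne_zero 3 hs) (mul_ne_zero three_ne_zero hs)]
    linear_combination (-s*(p+2*q)) * hs2
  have h3v : coeff 3 h = q/3 := by
    rw [hhe, coeff_hexp p q s hs 3 (by omega)]
    rw [show (3:ℕ)+1 = 0+1+1+1+1 from rfl, Finset.sum_range_succ, Finset.sum_range_succ,
      Finset.sum_range_succ, Finset.sum_range_succ, Finset.sum_range_zero]
    norm_num [alq, bernoulli'_zero, bernoulli'_one, bernoulli'_two, bernoulli'_three,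
      Nat.factorial]
    rw [div_eq_div_iff (pow_ne_zero 4 hs) three_ne_zero]
    linear_combination (-q*(s^2+p+q)) * hs2
  -- general coefficients
  refine ⟨h0, h1, ?_, ?_⟩
  · intro k hk
    rw [hhe, coeff_hexp p q s hs k (by omega), ← key_sum k hk p q, ← aeval_cpoly, ← hs2]
    have hpow : s^(k+1) = s^(k-1) * s^2 := by rw [← pow_add]; congr 1; omega
    rw [hpow]
    have hs1 : s^(k-1) ≠ 0 := pow_ne_zero _ hs
    have hs2' : (s:ℂ)^2 ≠ 0 := pow_ne_zero _ hs
    field_simp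
  · intro ft hft0 hftc
    have e1 := congrArg (coeff 1) hftc
    have e2 := congrArg (coeff 2) hftc
    have e3 := congrArg (coeff 3) hftc
    rw [pcomp, coeff_mk] at e1 e2 e3
    rw [show (1:ℕ)+1 = 0+1+1 from rfl, Finset.sum_range_succ, Finset.sum_range_succ,
      Finset.sum_range_zero] at e1
    rw [show (2:ℕ)+1 = 0+1+1+1 from rfl, Finset.sum_range_succ, Finset.sum_range_succ,
      Finset.sum_range_succ, Finset.sum_range_zero] at e2
    rw [show (3:ℕ)+1 = 0+1+1+1+1 from rfl, Finset.sum_range_succ, Finset.sum_range_succ,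
      Finset.sum_range_succ, Finset.sum_range_succ, Finset.sum_range_zero] at e3
    simp only [pow_zero, pow_one, coeff_one, coeff_X, h0, h1, zero_mul, one_mul,
      zero_add, add_zero, if_true, if_false] at e1 e2 e3
    norm_num at e1 e2 e3
    have c22 : coeff 2 (ft^2) = 1 := by
      rw [pow_two, coeff_mul, Finset.Nat.sum_antidiagonal_eq_sum_range_succ_mk]
      simp [Finset.sum_range_succ, hft0, e1]
    have c23 : coeff 3 (ft^2) = 2 * coeff 2 ft := by
      rw [pow_two, coeff_mul, Finset.Nat.sum_antidiagonal_eq_sum_range_succ_mk]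
      simp [Finset.sum_range_succ, hft0, e1]
      ring
    have c02 : coeff 0 (ft^2) = 0 := by
      rw [pow_two, coeff_mul]
      simp [hft0]
    have c12 : coeff 1 (ft^2) = 0 := by
      rw [pow_two, coeff_mul, Finset.Nat.sum_antidiagonal_eq_sum_range_succ_mk]
      simp [Finset.sum_range_succ, hft0]
    have c33 : coeff 3 (ft^3) = 1 := by
      rw [pow_succ, coeff_mul, Finset.Nat.sum_antidiagonal_eq_sum_range_succ_mk]
      simp [Finset.sum_range_succ, hft0, e1, c02, c12, c22]
    rw [c22, mul_one, h2v] at e2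
    rw [c23, c33, mul_one, h2v, h3v] at e3
    have f2 : coeff 2 ft = -(1/3) * (p+2*q)/s := by
      linear_combination e2
    refine ⟨e1, f2, ?_⟩
    rw [f2] at e3
    have f3 : coeff 3 ft = 2*(p+2*q)^2/(9*s^2) - q/3 := by linear_combination e3
    rw [f3, hs2]
    field_simp
    ring
end

section
/- Define s_k¹ by exp(-Σ_{j≥1} s_j¹ z^j) = Σ_{k≥0} (2k+1)!! (Σ_{j=0}^k 1/(2j+1)) (z u²)^k. Then s_1¹ = -4u², s_2¹ = -15u⁴, and s_3¹ = -(316/3)u⁶. -/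
open PowerSeries

/-- Formal termwise integration. -/
noncomputable def pint (f : PowerSeries ℂ) : PowerSeries ℂ :=
  PowerSeries.mk fun n => if n = 0 then 0 else coeff (n-1) f / n

/-- The series `Σ_{k≥0} (2k+1)!! (Σ_{j=0}^k 1/(2j+1)) (z u²)^k`
(constant term `1`). -/
noncomputable def D1ser (u : ℂ) : PowerSeries ℂ :=
  PowerSeries.mk fun n =>
    (Nat.doubleFactorial (2*n + 1) : ℂ)
      * (∑ j ∈ Finset.range (n+1), (1 : ℂ)/(2*j+1)) * u^(2*n)


lemma hD (u : ℂ) : coeff 0 (D1ser u) = 1 ∧ coeff 1 (D1ser u) = 4*u^2 ∧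
    coeff 2 (D1ser u) = 23*u^4 ∧ coeff 3 (D1ser u) = 176*u^6 := by
  refine ⟨?_, ?_, ?_, ?_⟩ <;>
    simp [D1ser, Finset.sum_range_succ, Nat.doubleFactorial] <;> norm_num

lemma hE0 (u : ℂ) : coeff 0 (D1ser u)⁻¹ = 1 := by
  rw [coeff_inv]
  simp [← coeff_zero_eq_constantCoeff, (hD u).1]

lemma hE1 (u : ℂ) : coeff 1 (D1ser u)⁻¹ = -4*u^2 := by
  rw [coeff_inv]
  rw [Finset.Nat.sum_antidiagonal_eq_sum_range_succ_mk]
  simp [Finset.sum_range_succ, ← coeff_zero_eq_constantCoeff,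
    (hD u).1, (hD u).2.1, hE0]

lemma hE2 (u : ℂ) : coeff 2 (D1ser u)⁻¹ = -7*u^4 := by
  rw [coeff_inv]
  rw [Finset.Nat.sum_antidiagonal_eq_sum_range_succ_mk]
  simp [Finset.sum_range_succ, ← coeff_zero_eq_constantCoeff,
    (hD u).1, (hD u).2.1, (hD u).2.2.1, hE0, hE1]
  ring

/-- `s_k¹` defined by
`exp(-Σ_{j≥1} s_j¹ z^j) = Σ_{k≥0} (2k+1)!! (Σ_{j=0}^k 1/(2j+1)) (z u²)^k`,
i.e. `Σ_{j≥1} s_j¹ z^j = -log(RHS)`, where the formal logarithm of a series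
`D` with constant term 1 is `log D = ∫₀^z D'/D`.
Then `s₁¹ = -4u²`, `s₂¹ = -15u⁴`, `s₃¹ = -(316/3)u⁶`. -/
theorem s1_values (u : ℂ) (s1 : ℕ → ℂ)
    (hs : ∀ k : ℕ, s1 k = -(coeff k (pint (d⁄dX ℂ (D1ser u) * (D1ser u)⁻¹)))) :
    s1 1 = -4 * u^2 ∧ s1 2 = -15 * u^4 ∧ s1 3 = -(316/3) * u^6 := by
  obtain ⟨h0, h1, h2, h3⟩ := hD u
  refine ⟨?_, ?_, ?_⟩ <;>
  · rw [hs]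
    simp only [pint, coeff_mk]
    norm_num [coeff_mul, Finset.Nat.sum_antidiagonal_eq_sum_range_succ_mk,
      Finset.sum_range_succ, coeff_derivative, h0, h1, h2, h3, hE0, hE1, hE2]
    try ring
end
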